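/- Downward closed ⪯^S-monotonic non-deterministic operators have minimal fixpoints on finite lattices: let L be a finite lattice and O : L → 𝒫(L)∖{∅} be ⪯^S-monotonic (x ≤ y implies O(x) ⪯^S O(y)). Then O has a ≤-minimal fixpoint, i.e., there is a ≤-minimal element x with x ∈ O(x), provided O(⊤) ⪯^S {⊤} (the top is a pre-fixpoint). In particular, since O(⊤) is nonempty and contained in L with ⊤ the top, O(⊤) ⪯^S {⊤} always holds, so a minimal fixpoint always exists. -/
import Mathlib


def smyth {L : Type*} [Lattice L] (X Y : Set L) : Prop :=
  ∀ y ∈ Y, ∃ x ∈ X, x ≤ y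

theorem minimal_fixpoint_exists_finite {L : Type*} [CompleteLattice L] [Finite L]
    (O : L → Set L) (hne : ∀ z : L, (O z).Nonempty)
    (hmono : ∀ x y : L, x ≤ y → smyth (O x) (O y)) :
    (∃ u ∈ O ⊤, u ≤ ⊤) ∧
    ∃ x : L, x ∈ O x ∧ ∀ z : L, z ∈ O z → ¬ z < x := by
  obtain ⟨u0, hu0⟩ := hne ⊤
  refine ⟨⟨u0, hu0, le_top⟩, ?_⟩
  set S : Set L := {z | ∃ u ∈ O z, u ≤ z} with hS
  have hST : (⊤ : L) ∈ S := ⟨u0, hu0, le_top⟩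
  obtain ⟨x, hxS, hmin⟩ := (Finite.to_wellFoundedLT (α := L)).wf.has_min S ⟨⊤, hST⟩
  obtain ⟨u, huO, hule⟩ := hxS
  have huS : u ∈ S := by
    obtain ⟨w, hwO, hwle⟩ := hmono u x hule u huO
    exact ⟨w, hwO, hwle⟩
  have hux : u = x := by
    by_contra h
    exact hmin u huS (lt_of_le_of_ne hule h)
  refine ⟨x, hux ▸ huO, fun z hz hlt => hmin z ⟨z, hz, le_rfl⟩ hlt⟩
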